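/- Let V > 0, a < 0, D > 0 with V^2 + 2aD ≥ 0, and let t_pC > 0 satisfy V·t_pC > D. Let ϑ_b be the least positive real t with V·t + (1/2)·a·t^2 = D, and let ϑ_ub be the unique real ϑ ≤ t_pC with ϑ·V + V·(t_pC − ϑ) + (1/2)·a·(t_pC − ϑ)^2 = D. Then the additional time saved by pre-braking, t_Δ := ϑ_b − ϑ_ub, is given in closed form by t_Δ = (−V + √(V^2 + 2aD))/a − ( t_pC − √(2(V·t_pC − D)/(−a)) ). -/

import Mathlib

/-- Lemma 1 of the paper: With `V > 0`, `a < 0`, `D > 0`,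
`V^2 + 2aD ≥ 0`, `t_pC > 0`, `V·t_pC > D`, if `ϑ_b` is the least positive `t`
with `V·t + (1/2)·a·t^2 = D` and `ϑ_ub` is the unique `ϑ ≤ t_pC` with
`ϑ·V + V·(t_pC − ϑ) + (1/2)·a·(t_pC − ϑ)^2 = D`, then the additional time
saved by pre-braking `t_Δ = ϑ_b − ϑ_ub` has the closed form
`(−V + √(V^2 + 2aD))/a − (t_pC − √(2(V·t_pC − D)/(−a)))`. -/
theorem additional_time_saved_by_prebraking
    (V a D tpC : ℝ) (hV : 0 < V) (ha : a < 0) (hD : 0 < D)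
    (hdisc : 0 ≤ V ^ 2 + 2 * a * D) (htpC : 0 < tpC) (hVD : V * tpC > D)
    (ϑb ϑub tΔ : ℝ)
    (hϑb : IsLeast {t : ℝ | 0 < t ∧ V * t + (1 / 2) * a * t ^ 2 = D} ϑb)
    (hϑub : ϑub ≤ tpC ∧
      ϑub * V + V * (tpC - ϑub) + (1 / 2) * a * (tpC - ϑub) ^ 2 = D)
    (hϑub_unique : ∀ ϑ : ℝ, ϑ ≤ tpC →
      ϑ * V + V * (tpC - ϑ) + (1 / 2) * a * (tpC - ϑ) ^ 2 = D → ϑ = ϑub)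
    (htΔ : tΔ = ϑb - ϑub) :
    tΔ = (-V + Real.sqrt (V ^ 2 + 2 * a * D)) / a
          - (tpC - Real.sqrt (2 * (V * tpC - D) / (-a))) := by
  set d := Real.sqrt (V ^ 2 + 2 * a * D) with hd_def
  have hd0 : 0 ≤ d := Real.sqrt_nonneg _
  have hd2 : d ^ 2 = V ^ 2 + 2 * a * D := Real.sq_sqrt hdisc
  have hdV : d < V := by
    nlinarith [sq_nonneg (d - V), sq_nonneg (d + V)]
  have hane : a ≠ 0 := ne_of_lt ha
  set t₀ := (-V + d) / a with ht₀
  -- t₀ is in the set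
  have ht₀pos : 0 < t₀ := div_pos_of_neg_of_neg (by linarith) ha
  have ht₀eq : V * t₀ + (1 / 2) * a * t₀ ^ 2 = D := by
    rw [ht₀]; field_simp
    nlinarith [hd2]
  -- hence ϑb ≤ t₀
  have hble : ϑb ≤ t₀ := hϑb.2 ⟨ht₀pos, ht₀eq⟩
  obtain ⟨⟨hbpos, hbeq⟩, _⟩ := hϑb
  -- factorization: ϑb is a root, so equals t₀ or t₁
  set t₁ := (-V - d) / a with ht₁
  have hfac : a * (ϑb - t₀) * (ϑb - t₁) = 0 := by
    have : V * ϑb + (1 / 2) * a * ϑb ^ 2 = D := hbeq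
    rw [ht₀, ht₁]; field_simp
    nlinarith [hd2]
  have ht01 : t₀ ≤ t₁ := by
    have h1 : t₁ - t₀ = (-2 * d) / a := by rw [ht₀, ht₁]; ring
    have h2 : 0 ≤ (-2 * d) / a := div_nonneg_of_nonpos (by linarith) ha.le
    linarith
  have hb_eq : ϑb = t₀ := by
    rcases mul_eq_zero.1 hfac with h | h
    · rcases mul_eq_zero.1 h with h | h
      · exact absurd h hane
      · linarith
    · linarith
  -- the unbraked threshold
  set s := Real.sqrt (2 * (V * tpC - D) / (-a)) with hs_def
  have hs0 : 0 ≤ s := Real.sqrt_nonneg _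
  have hs2 : s ^ 2 = 2 * (V * tpC - D) / (-a) := by
    apply Real.sq_sqrt
    apply div_nonneg (by linarith) (by linarith)
  have hub : tpC - s = ϑub := by
    apply hϑub_unique _ (by linarith)
    have hs2' : (-a) * s ^ 2 = 2 * (V * tpC - D) := by
      rw [hs2]; field_simp
    linear_combination (-1/2 : ℝ) * hs2'
  rw [htΔ, hb_eq, ← hub, ht₀]
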